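/- Let W ∈ ℂ[z₁,…,z_N] be a nondegenerate quasi-homogeneous polynomial of type (q₁,…,q_N) with all weights qᵢ < 1. Then the gradient of W is proper: Σᵢ|∂W/∂zᵢ(z)| → ∞ as ‖z‖ → ∞ in ℂ^N, i.e. for every K ∈ ℝ there is R > 0 such that ‖z‖ ≥ R implies Σᵢ|∂W/∂zᵢ(z)| ≥ K. -/

import Mathlib

open MvPolynomial

lemma eval_aeval' {N : ℕ} (x : Fin N → ℂ) (g : Fin N → MvPolynomial (Fin N) ℂ)
    (p : MvPolynomial (Fin N) ℂ) :
    eval x (aeval g p) = eval (fun j => eval x (g j)) p := by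
  induction p using MvPolynomial.induction_on with
  | C a => simp only [aeval_C, algebraMap_eq, eval_C]
  | add p q hp hq => rw [map_add, map_add, map_add, hp, hq]
  | mul_X p n hp => rw [map_mul, map_mul, map_mul, hp, aeval_X, eval_X]

lemma pderiv_aeval_scale {N : ℕ} (k : Fin N → ℕ) (lam : ℂ)
    (i : Fin N) (p : MvPolynomial (Fin N) ℂ) :
    pderiv i (aeval (fun j => (C lam) ^ (k j) * X j) p)
      = (C lam) ^ (k i) * aeval (fun j => (C lam) ^ (k j) * X j) (pderiv i p) := by
  induction p using MvPolynomial.induction_on with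
  | C a => simp
  | add p q hp hq => rw [map_add, map_add, hp, hq, map_add, map_add, mul_add]
  | mul_X p n hp =>
      simp only [map_mul, aeval_X, pderiv_mul, hp, map_add]
      by_cases h : i = n
      · subst h
        simp [pderiv_X, mul_add]
        ring
      · simp [pderiv_X, Pi.single_eq_of_ne (Ne.symm h), h]
        ring

lemma deriv_hom {N : ℕ} (W : MvPolynomial (Fin N) ℂ) (k : Fin N → ℕ) (d : ℕ)
    (hhom : ∀ (lam : ℂ) (z : Fin N → ℂ),
      eval (fun i => lam ^ (k i) * z i) W = lam ^ d * eval z W)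
    (lam : ℂ) (z : Fin N → ℂ) (i : Fin N) :
    lam ^ k i * eval (fun j => lam ^ k j * z j) (pderiv i W)
      = lam ^ d * eval z (pderiv i W) := by
  have hW : aeval (fun j => (C lam) ^ (k j) * X j) W = C (lam ^ d) * W := by
    apply MvPolynomial.funext
    intro x
    rw [eval_aeval']
    simp only [map_mul, eval_C, eval_pow, eval_X]
    rw [hhom]
  have h2 := congrArg (pderiv i) hW
  rw [pderiv_aeval_scale, pderiv_C_mul] at h2
  have h3 := congrArg (eval z) h2
  rw [map_mul, map_mul, eval_C, eval_pow, eval_C, eval_aeval'] at h3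
  simp only [map_mul, eval_C, eval_pow, eval_X] at h3
  exact h3

theorem gradient_proper_quasihomogeneous
    (N : ℕ) (hN : 1 ≤ N) (W : MvPolynomial (Fin N) ℂ)
    (q : Fin N → ℚ) (k : Fin N → ℕ) (d : ℕ)
    (hk : ∀ i, 0 < k i) (hd : 0 < d)
    (hq : ∀ i, q i = (k i : ℚ) / (d : ℚ))
    (hq0 : ∀ i, 0 < q i) (hq1 : ∀ i, q i < 1)
    (hhom : ∀ (lam : ℂ) (z : Fin N → ℂ),
      eval (fun i => lam ^ (k i) * z i) W = lam ^ d * eval z W)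
    (hnd : ∀ z : Fin N → ℂ, (∀ i, eval z (pderiv i W) = 0) → z = 0) :
    ∀ K : ℝ, ∃ R : ℝ, 0 < R ∧
      ∀ z : EuclideanSpace ℂ (Fin N), R ≤ ‖z‖ →
        K ≤ ∑ i, ‖eval (z : Fin N → ℂ) (pderiv i W)‖ := by
  intro K
  have hkd : ∀ i, k i < d := by
    intro i
    have h := hq1 i
    rw [hq i] at h
    have hd' : (0:ℚ) < (d:ℚ) := by exact_mod_cast hd
    rw [div_lt_one hd'] at h
    exact_mod_cast h
  set g : EuclideanSpace ℂ (Fin N) → ℝ :=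
    fun z => ∑ i, ‖eval (z : Fin N → ℂ) (pderiv i W)‖ with hgdef
  have hgc : Continuous g := by
    apply continuous_finset_sum
    intro i _
    exact ((MvPolynomial.continuous_eval (p := pderiv i W)).comp
      (PiLp.continuous_ofLp 2 (fun _ : Fin N => ℂ))).norm
  haveI : Nonempty (Fin N) := ⟨⟨0, hN⟩⟩
  have hsne : (Metric.sphere (0 : EuclideanSpace ℂ (Fin N)) 1).Nonempty := by
    refine ⟨EuclideanSpace.single ⟨0, hN⟩ (1:ℂ), ?_⟩
    rw [Metric.mem_sphere, dist_zero_right, EuclideanSpace.norm_single, norm_one]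
  obtain ⟨w₀, hw₀, hmin⟩ := (isCompact_sphere (0 : EuclideanSpace ℂ (Fin N)) 1).exists_isMinOn
    hsne hgc.continuousOn
  set m := g w₀ with hmdef
  have hw₀n : ‖w₀‖ = 1 := by rwa [Metric.mem_sphere, dist_zero_right] at hw₀
  have hm_nonneg : 0 ≤ m := Finset.sum_nonneg fun i _ => norm_nonneg _
  have hm0 : 0 < m := by
    rcases hm_nonneg.lt_or_eq with h | h
    · exact h
    · exfalso
      have hzero : ∀ i, eval (w₀ : Fin N → ℂ) (pderiv i W) = 0 := by
        intro i
        have hterm := (Finset.sum_eq_zero_iff_of_nonneg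
          (fun i _ => norm_nonneg (eval (w₀ : Fin N → ℂ) (pderiv i W)))).mp h.symm
        have := hterm i (Finset.mem_univ i)
        exact norm_eq_zero.mp this
      have hw0 : (w₀ : Fin N → ℂ) = 0 := hnd _ hzero
      have : w₀ = 0 := WithLp.ofLp_injective 2 hw0
      rw [this, norm_zero] at hw₀n
      exact one_ne_zero hw₀n.symm
  set Cc : ℝ := max 1 (K / m) with hCcdef
  have hCc1 : (1:ℝ) ≤ Cc := le_max_left _ _
  have hsN : (1:ℝ) ≤ Real.sqrt N := by
    rw [show (1:ℝ) = Real.sqrt 1 by simp]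
    exact Real.sqrt_le_sqrt (by exact_mod_cast hN)
  refine ⟨Real.sqrt N * Cc ^ d + 1, by positivity, ?_⟩
  intro z hz
  have hz1 : (1:ℝ) ≤ ‖z‖ := by
    have : (0:ℝ) ≤ Real.sqrt N * Cc ^ d := by positivity
    linarith
  -- IVT to find the scaling parameter
  set f : ℝ → ℝ := fun t => ∑ i, ‖(z : Fin N → ℂ) i‖^2 * t^(2 * k i) with hfdef
  have hfc : Continuous f := by
    apply continuous_finset_sum
    intro i _
    exact continuous_const.mul (continuous_pow _)
  have hf0 : f 0 = 0 := by
    simp only [hfdef]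
    apply Finset.sum_eq_zero
    intro i _
    rw [zero_pow (by have := hk i; omega), mul_zero]
  have hf1 : f 1 = ‖z‖^2 := by
    simp only [hfdef, one_pow, mul_one]
    rw [EuclideanSpace.norm_eq, Real.sq_sqrt]
    exact Finset.sum_nonneg fun i _ => sq_nonneg _
  have h1mem : (1:ℝ) ∈ Set.Icc (f 0) (f 1) := by
    constructor
    · rw [hf0]; norm_num
    · rw [hf1]; nlinarith
  obtain ⟨t, ht, hft⟩ := intermediate_value_Icc zero_le_one hfc.continuousOn h1mem
  have ht0 : 0 < t := by
    rcases ht.1.lt_or_eq with h | h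
    · exact h
    · exfalso; rw [← h, hf0] at hft; exact one_ne_zero hft.symm
  set lam : ℝ := t⁻¹ with hlamdef
  have hlam0 : 0 < lam := inv_pos.mpr ht0
  have hlam1 : 1 ≤ lam := by
    rw [hlamdef]
    rw [le_inv_comm₀ one_pos ht0]
    simpa using ht.2
  set w : EuclideanSpace ℂ (Fin N) := WithLp.toLp 2 (fun i => ((t:ℂ)) ^ (k i) * (z : Fin N → ℂ) i) with hwdef
  have hwsum : ∑ i, ‖(w : Fin N → ℂ) i‖^2 = 1 := by
    rw [← hft]
    apply Finset.sum_congr rfl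
    intro i _
    simp only [hwdef, norm_mul, norm_pow, Complex.norm_real, Real.norm_eq_abs,
      abs_of_pos ht0, mul_pow, ← pow_mul]
    ring
  have hwn : ‖w‖ = 1 := by
    rw [EuclideanSpace.norm_eq, hwsum, Real.sqrt_one]
  have hz_eq : (z : Fin N → ℂ) = fun j => ((lam:ℝ):ℂ) ^ (k j) * (w : Fin N → ℂ) j := by
    funext j
    simp only [hwdef, hlamdef]
    push_cast
    rw [← mul_assoc, ← mul_pow]
    rw [inv_mul_cancel₀ (by exact_mod_cast ht0.ne' : (t:ℂ) ≠ 0)]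
    rw [one_pow, one_mul]
  have hwi : ∀ i, ‖(w : Fin N → ℂ) i‖ ≤ 1 := by
    intro i
    have h1 : ‖(w : Fin N → ℂ) i‖^2 ≤ 1 := by
      rw [← hwsum]
      exact Finset.single_le_sum (f := fun i => ‖(w : Fin N → ℂ) i‖^2)
        (fun i _ => sq_nonneg _) (Finset.mem_univ i)
    nlinarith [norm_nonneg ((w : Fin N → ℂ) i)]
  have hzb : ‖z‖ ≤ Real.sqrt N * lam ^ d := by
    rw [EuclideanSpace.norm_eq]
    have hstep : ∑ i, ‖(z : Fin N → ℂ) i‖^2 ≤ (N:ℝ) * (lam ^ d)^2 := by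
      have : ∀ i : Fin N, ‖(z : Fin N → ℂ) i‖^2 ≤ (lam ^ d)^2 := by
        intro i
        have h1 : ‖(z : Fin N → ℂ) i‖ ≤ lam ^ d := by
          rw [hz_eq]
          simp only [norm_mul, norm_pow, Complex.norm_real, Real.norm_eq_abs,
            abs_of_pos hlam0]
          calc lam ^ k i * ‖(w : Fin N → ℂ) i‖ ≤ lam ^ k i * 1 := by
                apply mul_le_mul_of_nonneg_left (hwi i) (by positivity)
            _ = lam ^ k i := mul_one _
            _ ≤ lam ^ d := pow_le_pow_right₀ hlam1 (le_of_lt (hkd i))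
        nlinarith [norm_nonneg ((z : Fin N → ℂ) i)]
      calc ∑ i, ‖(z : Fin N → ℂ) i‖^2 ≤ ∑ _i : Fin N, (lam ^ d)^2 :=
            Finset.sum_le_sum fun i _ => this i
        _ = (N:ℝ) * (lam ^ d)^2 := by rw [Finset.sum_const, Finset.card_univ,
            Fintype.card_fin, nsmul_eq_mul]
    calc Real.sqrt (∑ i, ‖(z : Fin N → ℂ) i‖^2) ≤ Real.sqrt ((N:ℝ) * (lam ^ d)^2) :=
          Real.sqrt_le_sqrt hstep
      _ = Real.sqrt N * lam ^ d := by
          rw [Real.sqrt_mul (by positivity), Real.sqrt_sq (by positivity)]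
  have hlamC : Cc < lam := by
    by_contra hcon
    push_neg at hcon
    have h1 : lam ^ d ≤ Cc ^ d := pow_le_pow_left₀ hlam0.le hcon d
    have h2 : Real.sqrt N * lam ^ d ≤ Real.sqrt N * Cc ^ d :=
      mul_le_mul_of_nonneg_left h1 (by positivity)
    linarith
  -- lower bound on each gradient term
  have hterm : ∀ i : Fin N, lam * ‖eval (w : Fin N → ℂ) (pderiv i W)‖
      ≤ ‖eval (z : Fin N → ℂ) (pderiv i W)‖ := by
    intro i
    have hid := deriv_hom W k d hhom ((lam:ℝ):ℂ) (w : Fin N → ℂ) i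
    rw [← hz_eq] at hid
    have hnorm := congrArg norm hid
    simp only [norm_mul, norm_pow, Complex.norm_real, Real.norm_eq_abs,
      abs_of_pos hlam0] at hnorm
    have hki := hkd i
    have hsplit : lam ^ d = lam ^ k i * lam ^ (d - k i) := by
      rw [← pow_add]
      congr 1
      omega
    rw [hsplit] at hnorm
    have hpow : lam ≤ lam ^ (d - k i) := by
      calc lam = lam ^ 1 := (pow_one _).symm
        _ ≤ lam ^ (d - k i) := pow_le_pow_right₀ hlam1 (by have := hkd i; omega)
    have hk_pos : (0:ℝ) < lam ^ k i := by positivity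
    have : lam ^ k i * (lam * ‖eval (w : Fin N → ℂ) (pderiv i W)‖)
        ≤ lam ^ k i * ‖eval (z : Fin N → ℂ) (pderiv i W)‖ := by
      rw [hnorm]
      rw [mul_assoc]
      apply mul_le_mul_of_nonneg_left _ hk_pos.le
      exact mul_le_mul_of_nonneg_right hpow (norm_nonneg _)
    exact le_of_mul_le_mul_left this hk_pos
  have hwmem : w ∈ Metric.sphere (0 : EuclideanSpace ℂ (Fin N)) 1 := by
    rw [Metric.mem_sphere, dist_zero_right]; exact hwn
  have hgw : m ≤ g w := hmin hwmem
  calc K ≤ Cc * m := by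
        rcases le_or_gt K 0 with h | h
        · nlinarith
        · have : K / m ≤ Cc := le_max_right _ _
          calc K = (K / m) * m := by field_simp
            _ ≤ Cc * m := mul_le_mul_of_nonneg_right this hm0.le
    _ ≤ lam * m := mul_le_mul_of_nonneg_right hlamC.le hm0.le
    _ ≤ lam * g w := mul_le_mul_of_nonneg_left hgw (by positivity)
    _ = lam * ∑ i, ‖eval (w : Fin N → ℂ) (pderiv i W)‖ := rfl
    _ = ∑ i, lam * ‖eval (w : Fin N → ℂ) (pderiv i W)‖ := Finset.mul_sum _ _ _
    _ ≤ ∑ i, ‖eval (z : Fin N → ℂ) (pderiv i W)‖ := Finset.sum_le_sum fun i _ => hterm i
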